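/- Let n11, n22, n12, n21 ∈ ℕ. Suppose nonnegative reals (R1C, R1R, R1P, R2C, R2R, R2P) satisfy the randomized Han–Kobayashi achievability conditions: R1C+R1R ≤ n21, R2P ≤ (n22−n12)⁺, R1C+R1P+R2C+R2R ≤ max(n11,n12), R2C+R2R ≤ n12, R1P ≤ (n11−n21)⁺, R2C+R2P+R1C+R1R ≤ max(n22,n21). Then the pair (R1, R2) = (R1C+R1P, R2C+R2P) lies in the feedback capacity region C_LDIC/FB. -/
import Mathlib


/-- Soundness of Lemma 5: rates achievable by the randomized Han–Kobayashi
scheme with feedback lie in the feedback capacity region C_LDIC/FB. -/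
theorem hk_rates_in_feedback_capacity (n11 n22 n12 n21 : ℕ)
    (R1C R1R R1P R2C R2R R2P : ℝ)
    (h1C : 0 ≤ R1C) (h1R : 0 ≤ R1R) (h1P : 0 ≤ R1P)
    (h2C : 0 ≤ R2C) (h2R : 0 ≤ R2R) (h2P : 0 ≤ R2P)
    (a1 : R1C + R1R ≤ (n21 : ℝ))
    (a2 : R2P ≤ max ((n22 : ℝ) - n12) 0)
    (a3 : R1C + R1P + R2C + R2R ≤ max (n11 : ℝ) (n12 : ℝ))
    (a4 : R2C + R2R ≤ (n12 : ℝ))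
    (a5 : R1P ≤ max ((n11 : ℝ) - n21) 0)
    (a6 : R2C + R2P + R1C + R1R ≤ max (n22 : ℝ) (n21 : ℝ)) :
    0 ≤ R1C + R1P ∧ 0 ≤ R2C + R2P ∧
    R1C + R1P ≤ min (max (n11 : ℝ) (n12 : ℝ)) (max (n11 : ℝ) (n21 : ℝ)) ∧
    R2C + R2P ≤ min (max (n22 : ℝ) (n21 : ℝ)) (max (n22 : ℝ) (n12 : ℝ)) ∧
    (R1C + R1P) + (R2C + R2P) ≤
      min (max (n22 : ℝ) (n21 : ℝ) + max ((n11 : ℝ) - n21) 0)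
          (max (n11 : ℝ) (n12 : ℝ) + max ((n22 : ℝ) - n12) 0) := by
  have k1 : (n21 : ℝ) + max ((n11 : ℝ) - n21) 0 = max (n11 : ℝ) n21 := by
    rcases le_total ((n11 : ℝ)) n21 with h | h
    · rw [max_eq_right h, max_eq_right (by linarith : (n11 : ℝ) - n21 ≤ 0)]; ring
    · rw [max_eq_left h, max_eq_left (by linarith : (0 : ℝ) ≤ (n11 : ℝ) - n21)]; ring
  have k2 : (n12 : ℝ) + max ((n22 : ℝ) - n12) 0 = max (n22 : ℝ) n12 := by
    rcases le_total ((n22 : ℝ)) n12 with h | h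
    · rw [max_eq_right h, max_eq_right (by linarith : (n22 : ℝ) - n12 ≤ 0)]; ring
    · rw [max_eq_left h, max_eq_left (by linarith : (0 : ℝ) ≤ (n22 : ℝ) - n12)]; ring
  refine ⟨by linarith, by linarith, le_min (by linarith) (by linarith),
    le_min (by linarith) (by linarith), le_min (by linarith) (by linarith)⟩
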